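/- Let u₁,…,u_k : ℕ → ℤ. Suppose there exist real numbers θ₁,…,θ_k and a nonconstant real polynomial P such that sup_{n ∈ ℕ} |Σ_{i=1}^k θ_i u_i(n) − P(n)| < ∞. Then there exists a set E ⊆ ℕ of positive natural density such that R_{u₁}(E) ∩ ⋯ ∩ R_{u_k}(E) is not thick. -/

import Mathlib

open Filter

/-- Distance from a real number to the nearest integer. -/
noncomputable def distNearestInt (x : ℝ) : ℝ := |x - round x|

/-- A set of naturals is thick if it contains arbitrarily long blocks of
consecutive integers. -/
def Thick (S : Set ℕ) : Prop := ∀ L : ℕ, ∃ N : ℕ, ∀ j : ℕ, j ≤ L → N + j ∈ S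

/-- A set of naturals is syndetic if it has bounded gaps. -/
def Syndetic (S : Set ℕ) : Prop :=
  ∃ G : ℕ, 0 < G ∧ ∀ a : ℕ, ∃ n ∈ S, a ≤ n ∧ n < a + G

/-- A set is piecewise syndetic if it is the intersection of a thick set and a
syndetic set. -/
def PiecewiseSyndetic (S : Set ℕ) : Prop :=
  ∃ T B : Set ℕ, Thick T ∧ Syndetic B ∧ S = T ∩ B

open Classical in
/-- The number of elements of `E ∩ {1, …, N}`. -/
noncomputable def countIn (E : Set ℕ) (N : ℕ) : ℕ :=
  ((Finset.Icc 1 N).filter (fun n => n ∈ E)).card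

/-- `E` has a natural density that exists and is positive. -/
def PosDensity (E : Set ℕ) : Prop :=
  ∃ d : ℝ, 0 < d ∧
    Tendsto (fun N : ℕ => (countIn E N : ℝ) / (N : ℝ)) atTop (nhds d)

/-- The return-time set `R_u(E) = {n : ∃ m ∈ E, m + u n ∈ E}`. -/
def retSet (u : ℕ → ℤ) (E : Set ℕ) : Set ℕ :=
  {n : ℕ | ∃ m m' : ℕ, m ∈ E ∧ m' ∈ E ∧ (m' : ℤ) = (m : ℤ) + u n}

/-- The return-time set along the floor of a real-valued function. -/
noncomputable def retSetFloor (f : ℝ → ℝ) (E : Set ℕ) : Set ℕ :=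
  retSet (fun n => ⌊f (n : ℝ)⌋) E

/-- The return-time set along the closest integer to a real-valued function. -/
noncomputable def retSetRound (f : ℝ → ℝ) (E : Set ℕ) : Set ℕ :=
  retSet (fun n => round (f (n : ℝ))) E


section AuxProofs

lemma dni_nonneg (x : ℝ) : 0 ≤ distNearestInt x := abs_nonneg _

lemma dni_le_int (x : ℝ) (n : ℤ) : distNearestInt x ≤ |x - n| := by
  rcases le_or_gt (1/2) (|x - n|) with h | h
  · exact le_trans (abs_sub_round x) h
  · have hn : round x = n := by
      rw [round_eq]
      apply Int.floor_eq_iff.mpr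
      constructor
      · have := abs_lt.mp h
        push_cast
        linarith [this.1, this.2]
      · have := abs_lt.mp h
        push_cast
        linarith [this.1, this.2]
    rw [distNearestInt, hn]

lemma dni_le_abs (x : ℝ) : distNearestInt x ≤ |x| := by
  simpa using dni_le_int x 0

lemma dni_add_int (x : ℝ) (n : ℤ) : distNearestInt (x + n) = distNearestInt x := by
  apply le_antisymm
  · calc distNearestInt (x + n) ≤ |x + n - (round x + n : ℤ)| := dni_le_int _ _
      _ = |x - round x| := by push_cast; ring_nf
      _ = distNearestInt x := rfl
  · calc distNearestInt x ≤ |x - (round (x + (n:ℝ)) - n : ℤ)| := dni_le_int _ _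
      _ = |x + n - round (x + (n:ℝ))| := by push_cast; ring_nf
      _ = distNearestInt (x + n) := rfl

lemma dni_neg (x : ℝ) : distNearestInt (-x) = distNearestInt x := by
  apply le_antisymm
  · calc distNearestInt (-x) ≤ |-x - (-(round x) : ℤ)| := dni_le_int _ _
      _ = |x - round x| := by push_cast; rw [← abs_neg]; ring_nf
      _ = distNearestInt x := rfl
  · calc distNearestInt x ≤ |x - (-(round (-x)) : ℤ)| := dni_le_int _ _
      _ = |-x - round (-x)| := by push_cast; rw [← abs_neg]; ring_nf
      _ = distNearestInt (-x) := rfl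

lemma dni_add_le (x y : ℝ) : distNearestInt (x + y) ≤ distNearestInt x + distNearestInt y := by
  calc distNearestInt (x + y) ≤ |x + y - (round x + round y : ℤ)| := dni_le_int _ _
    _ = |(x - round x) + (y - round y)| := by push_cast; ring_nf
    _ ≤ |x - round x| + |y - round y| := abs_add_le _ _
    _ = _ := rfl

lemma dni_sub_le (x y : ℝ) : distNearestInt (x - y) ≤ distNearestInt x + distNearestInt y := by
  rw [sub_eq_add_neg]
  calc distNearestInt (x + -y) ≤ distNearestInt x + distNearestInt (-y) := dni_add_le _ _
    _ = _ := by rw [dni_neg]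

lemma dni_lip (x y : ℝ) : distNearestInt x ≤ |x - y| + distNearestInt y := by
  calc distNearestInt x ≤ |x - round y| := dni_le_int _ _
    _ = |(x - y) + (y - round y)| := by ring_nf
    _ ≤ |x - y| + |y - round y| := abs_add_le _ _
    _ = _ := rfl

lemma dni_nat_mul (n : ℕ) (x : ℝ) : distNearestInt (n * x) ≤ n * distNearestInt x := by
  calc distNearestInt (n * x) ≤ |n * x - ((n : ℤ) * round x : ℤ)| := dni_le_int _ _
    _ = |(n:ℝ)| * |x - round x| := by rw [← abs_mul]; push_cast; ring_nf
    _ = n * distNearestInt x := by rw [abs_of_nonneg (by positivity : (0:ℝ) ≤ (n:ℝ))]; rfl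

lemma dni_sum_le {ι : Type*} (s : Finset ι) (f : ι → ℝ) :
    distNearestInt (∑ i ∈ s, f i) ≤ ∑ i ∈ s, distNearestInt (f i) := by
  induction s using Finset.cons_induction with
  | empty => simp [distNearestInt]
  | cons a s ha ih =>
    rw [Finset.sum_cons, Finset.sum_cons]
    exact le_trans (dni_add_le _ _) (by linarith)

lemma dni_half : distNearestInt (1/2 : ℝ) = 1/2 := by
  have : round ((1:ℝ)/2) = 1 := by
    rw [round_eq]; norm_num
  rw [distNearestInt, this]
  norm_num

lemma dni_continuous : Continuous distNearestInt := by
  rw [Metric.continuous_iff]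
  intro b ε hε
  refine ⟨ε, hε, fun a hab => ?_⟩
  rw [Real.dist_eq] at *
  have h1 := dni_lip a b
  have h2 := dni_lip b a
  rw [abs_sub_comm b a] at h2
  rw [abs_lt]
  constructor <;> linarith [hab, h1, h2]

lemma dni_eq_zero {x : ℝ} (h : distNearestInt x = 0) : ∃ n : ℤ, x = n := by
  refine ⟨round x, ?_⟩
  have := abs_eq_zero.mp h
  linarith

/-- Simultaneous Dirichlet recurrence. -/
lemma bohr_rec (k : ℕ) (α : Fin k → ℝ) {δ : ℝ} (hδ : 0 < δ) :
    ∃ q : ℕ, 1 ≤ q ∧ ∀ i, distNearestInt (q * α i) < δ := by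
  set n : ℕ := ⌈1/δ⌉₊ + 1 with hn
  have hnpos : (0:ℝ) < n := by positivity
  have hinv : (1:ℝ)/n < δ := by
    rw [div_lt_iff₀ hnpos]
    have h1 : 1/δ ≤ (⌈1/δ⌉₊ : ℝ) := Nat.le_ceil _
    have h2 : (⌈1/δ⌉₊ : ℝ) < n := by rw [hn]; push_cast; linarith
    calc (1:ℝ) = δ * (1/δ) := by field_simp
      _ ≤ δ * ⌈1/δ⌉₊ := by nlinarith
      _ < δ * n := by nlinarith
  have hfr : ∀ (p : ℕ) (i : Fin k), ⌊Int.fract ((p:ℝ) * α i) * n⌋₊ < n := by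
    intro p i
    rw [Nat.floor_lt (mul_nonneg (Int.fract_nonneg _) hnpos.le)]
    calc Int.fract ((p:ℝ) * α i) * n < 1 * n := by
          apply mul_lt_mul_of_pos_right (Int.fract_lt_one _) hnpos
      _ = n := one_mul _
  set F : Fin (n^k + 1) → (Fin k → Fin n) :=
    fun p i => ⟨⌊Int.fract ((p:ℝ) * α i) * n⌋₊, hfr p i⟩ with hF
  have hcard : Fintype.card (Fin k → Fin n) < Fintype.card (Fin (n^k + 1)) := by
    simp [Fintype.card_fun]
  obtain ⟨p, p', hne, heq⟩ := Fintype.exists_ne_map_eq_of_card_lt F hcard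
  have key : ∀ p p' : Fin (n^k + 1), F p = F p' → (p:ℕ) < (p':ℕ) →
      ∃ q : ℕ, 1 ≤ q ∧ ∀ i, distNearestInt (q * α i) < δ := by
    intro p p' heq hlt
    refine ⟨(p':ℕ) - (p:ℕ), by omega, fun i => ?_⟩
    have hfe : (⌊Int.fract (((p:ℕ):ℝ) * α i) * n⌋₊ : ℕ) = ⌊Int.fract (((p':ℕ):ℝ) * α i) * n⌋₊ := by
      have h0 := congrArg Fin.val (congrFun heq i)
      simpa [hF] using h0
    set a := Int.fract (((p:ℕ):ℝ) * α i) with ha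
    set b := Int.fract (((p':ℕ):ℝ) * α i) with hb
    have hab : |b - a| < 1/n := by
      have h1 : (⌊a * n⌋₊ : ℝ) ≤ a * n := Nat.floor_le (mul_nonneg (Int.fract_nonneg _) hnpos.le)
      have h2 : a * n < ⌊a * n⌋₊ + 1 := Nat.lt_floor_add_one _
      have h3 : (⌊b * n⌋₊ : ℝ) ≤ b * n := Nat.floor_le (mul_nonneg (Int.fract_nonneg _) hnpos.le)
      have h4 : b * n < ⌊b * n⌋₊ + 1 := Nat.lt_floor_add_one _
      have he : (⌊a * n⌋₊ : ℝ) = (⌊b * n⌋₊ : ℝ) := by rw [hfe]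
      have hba : b - a < 1/n := by rw [lt_div_iff₀ hnpos]; nlinarith
      have hab2 : a - b < 1/n := by rw [lt_div_iff₀ hnpos]; nlinarith
      rw [abs_lt]
      constructor <;> linarith
    have hcast : ((((p':ℕ) - (p:ℕ) : ℕ)):ℝ) = ((p':ℕ):ℝ) - ((p:ℕ):ℝ) :=
      Nat.cast_sub hlt.le
    calc distNearestInt (((((p':ℕ) - (p:ℕ):ℕ)):ℝ) * α i)
        ≤ |((((p':ℕ) - (p:ℕ):ℕ)):ℝ) * α i - ((⌊((p':ℕ):ℝ) * α i⌋ - ⌊((p:ℕ):ℝ) * α i⌋ : ℤ):ℝ)| :=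
          dni_le_int _ _
      _ = |b - a| := by
          rw [hcast, hb, ha]
          unfold Int.fract
          push_cast
          ring_nf
      _ < 1/n := hab
      _ < δ := hinv
  rcases Fin.lt_or_lt_of_ne hne with h | h
  · exact key p p' heq h
  · exact key p' p heq.symm h

/-- Unbounded recurrence. -/
lemma bohr_rec_unbounded (k : ℕ) (α : Fin k → ℝ) {δ : ℝ} (hδ : 0 < δ) (M : ℕ) :
    ∃ q : ℕ, M < q ∧ ∀ i, distNearestInt (q * α i) < δ := by
  by_cases hc : ∃ q0 : ℕ, 1 ≤ q0 ∧ ∀ i, distNearestInt (q0 * α i) = 0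
  · obtain ⟨q0, hq0, hzero⟩ := hc
    refine ⟨q0 * (M + 1), by nlinarith, fun i => ?_⟩
    obtain ⟨m, hm⟩ := dni_eq_zero (hzero i)
    have : ((q0 * (M + 1) : ℕ) : ℝ) * α i = (0:ℝ) + ((M+1 : ℕ) * m : ℤ) := by
      push_cast
      calc (q0:ℝ) * ((M:ℝ)+1) * α i = ((M:ℝ)+1) * ((q0:ℝ) * α i) := by ring
        _ = ((M:ℝ)+1) * m := by rw [hm]
        _ = 0 + (((M:ℝ)+1) * m) := by ring
    rw [this, dni_add_int]
    simpa [distNearestInt] using hδ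
  · push_neg at hc
    -- finite set of positive values
    set V : Finset ℝ :=
      (((Finset.Icc 1 M) ×ˢ (Finset.univ : Finset (Fin k))).image
        (fun qi => distNearestInt ((qi.1 : ℝ) * α qi.2))).filter (fun x => 0 < x) with hV
    set δ' : ℝ := (insert δ V).min' (Finset.insert_nonempty _ _) with hδ'
    have hδ'pos : 0 < δ' := by
      have : ∀ x ∈ insert δ V, 0 < x := by
        intro x hx
        rcases Finset.mem_insert.mp hx with rfl | hx
        · exact hδ
        · exact (Finset.mem_filter.mp hx).2
      exact this _ (Finset.min'_mem _ _)
    have hδ'le : δ' ≤ δ := Finset.min'_le _ _ (Finset.mem_insert_self _ _)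
    obtain ⟨q, hq1, hq⟩ := bohr_rec k α hδ'pos
    refine ⟨q, ?_, fun i => lt_of_lt_of_le (hq i) hδ'le⟩
    by_contra hqM
    push_neg at hqM
    obtain ⟨i0, hi0⟩ := hc q hq1
    have hi0pos : 0 < distNearestInt ((q:ℝ) * α i0) :=
      lt_of_le_of_ne (dni_nonneg _) (Ne.symm hi0)
    have hmem : distNearestInt ((q:ℝ) * α i0) ∈ insert δ V := by
      apply Finset.mem_insert_of_mem
      rw [hV]
      apply Finset.mem_filter.mpr
      refine ⟨Finset.mem_image.mpr ⟨(q, i0), ?_, rfl⟩, hi0pos⟩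
      exact Finset.mem_product.mpr ⟨Finset.mem_Icc.mpr ⟨hq1, hqM⟩, Finset.mem_univ _⟩
    have := Finset.min'_le _ _ hmem
    have := hq i0
    linarith

/-- Bohr sets are syndetic. -/
lemma bohr_syndetic (k : ℕ) (α : Fin k → ℝ) {δ : ℝ} (hδ : 0 < δ) :
    ∃ G : ℕ, ∀ a : ℕ, ∃ j : ℕ, j ≤ G ∧ ∀ i, distNearestInt (((a + j : ℕ) : ℝ) * α i) < δ := by
  classical
  set φ : ℕ → (Fin k → ℝ) := fun p i => Int.fract ((p:ℝ) * α i) with hφ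
  set Y : Set (Fin k → ℝ) := closure (Set.range φ) with hY
  have hYsub : Y ⊆ Set.univ.pi (fun _ => Set.Icc (0:ℝ) 1) := by
    apply closure_minimal
    · rintro _ ⟨p, rfl⟩
      intro i _
      exact ⟨Int.fract_nonneg _, (Int.fract_lt_one _).le⟩
    · exact isClosed_set_pi (fun i _ => isClosed_Icc)
  have hYcomp : IsCompact Y := by
    exact IsCompact.of_isClosed_subset (isCompact_univ_pi (fun i => isCompact_Icc))
      isClosed_closure hYsub
  set U : ℕ → Set (Fin k → ℝ) :=
    fun p => {y | ∀ i, distNearestInt (y i + (p:ℝ) * α i) < δ} with hU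
  have hUopen : ∀ p, IsOpen (U p) := by
    intro p
    have : U p = ⋂ i, (fun y : Fin k → ℝ => distNearestInt (y i + (p:ℝ) * α i)) ⁻¹' (Set.Iio δ) := by
      ext y; simp [hU]
    rw [this]
    apply isOpen_iInter_of_finite
    intro i
    apply IsOpen.preimage
    · exact dni_continuous.comp ((continuous_apply i).add continuous_const)
    · exact isOpen_Iio
  have hcover : Y ⊆ ⋃ p, U p := by
    intro y hy
    obtain ⟨z, ⟨m, rfl⟩, hz⟩ := Metric.mem_closure_iff.mp hy (δ/2) (by linarith)
    obtain ⟨q, hqm, hq⟩ := bohr_rec_unbounded k α (by linarith : (0:ℝ) < δ/2) m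
    refine Set.mem_iUnion.mpr ⟨q - m, fun i => ?_⟩
    have hdist : |y i - φ m i| < δ/2 := by
      by_cases hk : k = 0
      · subst hk; exact absurd i.2 (by omega)
      · have := (dist_pi_lt_iff (by linarith : (0:ℝ) < δ/2)).mp hz i
        rwa [Real.dist_eq] at this
    calc distNearestInt (y i + ((q - m : ℕ):ℝ) * α i)
        ≤ |(y i + ((q - m : ℕ):ℝ) * α i) - (φ m i + ((q - m : ℕ):ℝ) * α i)| +
            distNearestInt (φ m i + ((q - m : ℕ):ℝ) * α i) := dni_lip _ _
      _ < δ/2 + δ/2 := by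
          apply add_lt_add
          · simpa using hdist
          · have hsub : ((q - m : ℕ):ℝ) = (q:ℝ) - m := Nat.cast_sub hqm.le
            have : φ m i + ((q - m : ℕ):ℝ) * α i = (q:ℝ) * α i + (-⌊((m:ℕ):ℝ) * α i⌋ : ℤ) := by
              rw [hsub, hφ]
              unfold Int.fract
              push_cast
              ring
            rw [this, dni_add_int]
            exact hq i
      _ = δ := by ring
  obtain ⟨T, hT⟩ := hYcomp.elim_finite_subcover U hUopen hcover
  refine ⟨T.sup id, fun a => ?_⟩
  have hmem : φ a ∈ Y := subset_closure ⟨a, rfl⟩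
  obtain ⟨p, hpT, hp⟩ := Set.mem_iUnion₂.mp (hT hmem)
  refine ⟨p, Finset.le_sup (f := id) hpT, fun i => ?_⟩
  have : ((a + p : ℕ):ℝ) * α i = (φ a i + (p:ℝ) * α i) + (⌊((a:ℕ):ℝ) * α i⌋ : ℤ) := by
    rw [hφ]
    unfold Int.fract
    push_cast
    ring
  rw [this, dni_add_int]
  exact hp i

open Polynomial in
lemma finDiff : ∀ (d : ℕ) (P : Polynomial ℝ), P.natDegree = d → ∀ (x h : ℝ), h ≠ 0 →
    ∑ j ∈ Finset.range (d+1), (-1:ℝ)^j * (d.choose j : ℝ) * P.eval (x + (j:ℝ) * h)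
      = (-1:ℝ)^d * (d.factorial : ℝ) * P.leadingCoeff * h^d := by
  intro d
  induction d with
  | zero =>
    intro P hP x h hh
    obtain ⟨a, rfl⟩ := Polynomial.natDegree_eq_zero.mp hP
    simp [Polynomial.leadingCoeff]
  | succ d ih =>
    intro P hP x h hh
    have hPne : P ≠ 0 := fun h0 => by simp [h0] at hP
    have hc : P.leadingCoeff ≠ 0 := Polynomial.leadingCoeff_ne_zero.mpr hPne
    set Q : Polynomial ℝ := Polynomial.taylor h P - P with hQ
    have hQeval : ∀ y : ℝ, Q.eval y = P.eval (y + h) - P.eval y := by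
      intro y
      rw [hQ, Polynomial.eval_sub, Polynomial.taylor_eval]
    -- coefficient d+1 of Q is zero
    have hcoeff_top : Q.coeff (d+1) = 0 := by
      rw [hQ, Polynomial.coeff_sub, Polynomial.taylor_coeff]
      have hdeg : (Polynomial.hasseDeriv (d+1) P).natDegree < 1 := by
        have := Polynomial.natDegree_hasseDeriv_le P (d+1)
        omega
      rw [Polynomial.eval_eq_sum_range' hdeg]
      simp [Polynomial.hasseDeriv_coeff, hP]
    -- coefficient d of Q
    have hcoeff_d : Q.coeff d = (d+1 : ℝ) * P.leadingCoeff * h := by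
      rw [hQ, Polynomial.coeff_sub, Polynomial.taylor_coeff]
      have hdeg : (Polynomial.hasseDeriv d P).natDegree < 2 := by
        have := Polynomial.natDegree_hasseDeriv_le P d
        omega
      rw [Polynomial.eval_eq_sum_range' hdeg]
      rw [Finset.sum_range_succ, Finset.sum_range_one]
      simp only [Polynomial.hasseDeriv_coeff]
      have h1 : (0 + d).choose d = 1 := by simp
      have h2 : (1 + d).choose d = d + 1 := by
        rw [Nat.add_comm]
        exact Nat.choose_succ_self_right d
      rw [h1, h2]
      have h3 : P.coeff (1 + d) = P.leadingCoeff := by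
        rw [Nat.add_comm, ← hP, Polynomial.coeff_natDegree]
      rw [h3]
      push_cast
      ring
    -- degree of Q
    have hQdegle : Q.natDegree ≤ d := by
      rw [Polynomial.natDegree_le_iff_coeff_eq_zero]
      intro N hN
      rcases Nat.lt_or_ge (d+1) N with hN2 | hN2
      · apply Polynomial.coeff_eq_zero_of_natDegree_lt
        apply lt_of_le_of_lt _ hN2
        apply le_trans (Polynomial.natDegree_sub_le _ _)
        rw [Polynomial.natDegree_taylor, hP]
        simp
      · have : N = d + 1 := by omega
        rw [this]
        exact hcoeff_top
    have hQcne : Q.coeff d ≠ 0 := by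
      rw [hcoeff_d]
      apply mul_ne_zero (mul_ne_zero _ hc) hh
      positivity
    have hQdeg : Q.natDegree = d :=
      le_antisymm hQdegle (Polynomial.le_natDegree_of_ne_zero hQcne)
    have hlc : Q.leadingCoeff = (d+1 : ℝ) * P.leadingCoeff * h := by
      rw [Polynomial.leadingCoeff, hQdeg, hcoeff_d]
    have hihQ := ih Q hQdeg x h hh
    set p : ℕ → ℝ := fun j => P.eval (x + (j:ℝ) * h) with hp
    have hQp : ∀ j : ℕ, Q.eval (x + (j:ℝ)*h) = p (j+1) - p j := by
      intro j
      rw [hQeval, hp]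
      simp only []
      congr 2
      push_cast
      ring
    set A : ℝ := ∑ j ∈ Finset.range (d+1), (-1:ℝ)^j * (d.choose j : ℝ) * p (j+1) with hA
    set B : ℝ := ∑ j ∈ Finset.range (d+1), (-1:ℝ)^j * (d.choose j : ℝ) * p j with hB
    have hQsum : ∑ j ∈ Finset.range (d+1), (-1:ℝ)^j * (d.choose j : ℝ) * Q.eval (x + (j:ℝ)*h)
        = A - B := by
      rw [hA, hB, ← Finset.sum_sub_distrib]
      apply Finset.sum_congr rfl
      intro j _
      rw [hQp j]
      ring
    have key1 : ∑ j ∈ Finset.range (d+2), (-1:ℝ)^j * ((d+1).choose j : ℝ) * p j = B - A := by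
      rw [Finset.sum_range_succ' (fun j => (-1:ℝ)^j * ((d+1).choose j : ℝ) * p j) (d+1)]
      have hterm : ∀ j ∈ Finset.range (d+1),
          (-1:ℝ)^(j+1) * ((d+1).choose (j+1) : ℝ) * p (j+1)
          = (-((-1:ℝ)^j * (d.choose j : ℝ) * p (j+1)))
            + (-1:ℝ)^(j+1) * (d.choose (j+1) : ℝ) * p (j+1) := by
        intro j _
        rw [Nat.choose_succ_succ]
        push_cast
        ring
      rw [Finset.sum_congr rfl hterm, Finset.sum_add_distrib]
      have hfirst : ∑ j ∈ Finset.range (d+1), (-((-1:ℝ)^j * (d.choose j : ℝ) * p (j+1))) = -A := by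
        rw [hA, ← Finset.sum_neg_distrib]
      rw [hfirst]
      have hsecond : (∑ j ∈ Finset.range (d+1), (-1:ℝ)^(j+1) * (d.choose (j+1) : ℝ) * p (j+1))
          + (-1:ℝ)^0 * (((d+1).choose 0 : ℕ) : ℝ) * p 0
          = B := by
        have h0 : (-1:ℝ)^0 * (((d+1).choose 0 : ℕ) : ℝ) * p 0
            = (-1:ℝ)^0 * ((d.choose 0 : ℕ) : ℝ) * p 0 := by simp
        rw [h0, ← Finset.sum_range_succ' (fun j => (-1:ℝ)^j * (d.choose j : ℝ) * p j) (d+1)]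
        rw [Finset.sum_range_succ, hB]
        simp [Nat.choose_eq_zero_of_lt]
      rw [add_assoc, hsecond]
      ring
    calc ∑ j ∈ Finset.range (d+1+1), (-1:ℝ)^j * ((d+1).choose j : ℝ) * P.eval (x + (j:ℝ)*h)
        = B - A := key1
      _ = -(A - B) := by ring
      _ = -((-1:ℝ)^d * (d.factorial : ℝ) * Q.leadingCoeff * h^d) := by rw [← hQsum, hihQ]
      _ = (-1:ℝ)^(d+1) * ((d+1).factorial : ℝ) * P.leadingCoeff * h^(d+1) := by
          rw [hlc, Nat.factorial_succ]
          push_cast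
          ring

lemma density_of_seq (m : ℕ → ℕ) (Q : ℕ) (hQ : 0 < Q)
    (h1 : ∀ r, r * Q + 1 ≤ m r) (h2 : ∀ r, m r ≤ (r+1) * Q) :
    PosDensity (Set.range m) := by
  classical
  set E : Set ℕ := Set.range m with hE
  have hmono : StrictMono m := by
    apply strictMono_nat_of_lt_succ
    intro r
    have ha := h2 r
    have hb := h1 (r+1)
    omega
  have hcount : ∀ M, countIn E M = ((Finset.Icc 1 M).filter (fun n => n ∈ E)).card :=
    fun M => rfl
  have hlow : ∀ M, M / Q ≤ countIn E M := by
    intro M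
    rw [hcount]
    have := Finset.card_le_card_of_injOn m
      (s := Finset.range (M / Q))
      (t := (Finset.Icc 1 M).filter (fun n => n ∈ E))
      (by
        intro r hr
        simp only [Finset.mem_coe, Finset.mem_range] at hr ⊢
        apply Finset.mem_filter.mpr
        constructor
        · apply Finset.mem_Icc.mpr
          constructor
          · have := h1 r; omega
          · have hrr : (r+1) * Q ≤ (M / Q) * Q := Nat.mul_le_mul_right _ (by omega)
            have := Nat.div_mul_le_self M Q
            have := h2 r
            omega
        · exact ⟨r, rfl⟩)
      (hmono.injective.injOn)
    simpa using this
  have hup : ∀ M, countIn E M ≤ M / Q + 1 := by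
    intro M
    rw [hcount]
    have hsub : (Finset.Icc 1 M).filter (fun n => n ∈ E) ⊆
        Finset.image m (Finset.range (M / Q + 1)) := by
      intro x hx
      obtain ⟨hx1, hx2⟩ := Finset.mem_filter.mp hx
      obtain ⟨r, rfl⟩ := hx2
      apply Finset.mem_image.mpr
      refine ⟨r, Finset.mem_range.mpr ?_, rfl⟩
      have hxM := (Finset.mem_Icc.mp hx1).2
      have := h1 r
      have hrq : r * Q ≤ M := by omega
      have := (Nat.le_div_iff_mul_le hQ).mpr hrq
      omega
    calc ((Finset.Icc 1 M).filter (fun n => n ∈ E)).card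
        ≤ (Finset.image m (Finset.range (M / Q + 1))).card := Finset.card_le_card hsub
      _ ≤ (Finset.range (M / Q + 1)).card := Finset.card_image_le
      _ = M / Q + 1 := by simp
  refine ⟨1 / Q, by positivity, ?_⟩
  have hQR : (0:ℝ) < (Q:ℝ) := by exact_mod_cast hQ
  apply tendsto_of_tendsto_of_tendsto_of_le_of_le'
    (g := fun M : ℕ => 1/(Q:ℝ) - 1/(M:ℝ)) (h := fun M : ℕ => 1/(Q:ℝ) + 1/(M:ℝ))
  · have := (tendsto_const_nhds (x := 1/(Q:ℝ)) (f := atTop (α := ℕ))).sub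
      tendsto_one_div_atTop_nhds_zero_nat
    simpa using this
  · have := (tendsto_const_nhds (x := 1/(Q:ℝ)) (f := atTop (α := ℕ))).add
      tendsto_one_div_atTop_nhds_zero_nat
    simpa using this
  · filter_upwards [eventually_ge_atTop 1] with M hM
    have hMR : (0:ℝ) < (M:ℝ) := by exact_mod_cast hM
    have hcast : (M:ℝ)/Q - 1 ≤ ((M / Q : ℕ) : ℝ) := by
      have hdm := Nat.div_add_mod M Q
      have hmod : (M % Q : ℕ) < Q := Nat.mod_lt _ hQ
      have hdmR : (Q:ℝ) * ((M / Q : ℕ):ℝ) + ((M % Q : ℕ):ℝ) = (M:ℝ) := by exact_mod_cast hdm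
      have hmodR : ((M % Q : ℕ):ℝ) < (Q:ℝ) := by exact_mod_cast hmod
      rw [sub_le_iff_le_add, div_le_iff₀ hQR]
      nlinarith
    have hfc : ((M / Q : ℕ):ℝ) ≤ (countIn E M : ℝ) := by exact_mod_cast hlow M
    have heq : ((M:ℝ)/Q - 1)/M = 1/(Q:ℝ) - 1/(M:ℝ) := by
      field_simp
    calc 1/(Q:ℝ) - 1/(M:ℝ) = ((M:ℝ)/Q - 1)/M := heq.symm
      _ ≤ (countIn E M : ℝ)/M := by
          gcongr
          linarith
  · filter_upwards [eventually_ge_atTop 1] with M hM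
    have hMR : (0:ℝ) < (M:ℝ) := by exact_mod_cast hM
    have hcast : ((M / Q : ℕ):ℝ) ≤ (M:ℝ)/Q := by
      have hdm := Nat.div_mul_le_self M Q
      have hdmR : ((M / Q : ℕ):ℝ) * (Q:ℝ) ≤ (M:ℝ) := by exact_mod_cast hdm
      rw [le_div_iff₀ hQR]
      linarith
    have hfc : (countIn E M : ℝ) ≤ ((M / Q : ℕ):ℝ) + 1 := by exact_mod_cast hup M
    have heq : ((M:ℝ)/Q + 1)/M = 1/(Q:ℝ) + 1/(M:ℝ) := by field_simp
    calc (countIn E M : ℝ)/M ≤ ((M:ℝ)/Q + 1)/M := by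
          gcongr
          linarith
      _ = 1/(Q:ℝ) + 1/(M:ℝ) := heq

end AuxProofs

/-- Proposition 2.3 (Bohr obstruction principle). -/
theorem stmt_8 (k : ℕ) (u : Fin k → ℕ → ℤ) (θ : Fin k → ℝ) (P : Polynomial ℝ)
    (hP : 0 < P.natDegree)
    (D : ℝ) (hD : ∀ n : ℕ, |(∑ i, θ i * (u i n : ℝ)) - P.eval (n : ℝ)| ≤ D) :
    ∃ E : Set ℕ, PosDensity E ∧ ¬ Thick (⋂ i, retSet (u i) E) := by
  classical
  have hPne : P ≠ 0 := Polynomial.ne_zero_of_natDegree_gt hP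
  set d : ℕ := P.natDegree with hd
  set c : ℝ := P.leadingCoeff with hc
  have hcne : c ≠ 0 := Polynomial.leadingCoeff_ne_zero.mpr hPne
  have hcabs : 0 < |c| := abs_pos.mpr hcne
  have hD0 : 0 ≤ D := le_trans (abs_nonneg _) (hD 0)
  have hfacpos : (0:ℝ) < (d.factorial : ℝ) := by
    exact_mod_cast d.factorial_pos
  -- choose the step size t
  set t : ℕ := ⌈8 * 2^d * D / ((d.factorial : ℝ) * |c|)⌉₊ + 1 with ht
  have ht1 : 1 ≤ t := by omega
  have htR : (1:ℝ) ≤ (t:ℝ) := by exact_mod_cast ht1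
  have htpos : (0:ℝ) < (t:ℝ) := by linarith
  have htpow : (t:ℝ) ≤ (t:ℝ)^d := le_self_pow₀ htR (by omega)
  have hpow : 8 * 2^d * D ≤ (d.factorial:ℝ) * |c| * (t:ℝ)^d := by
    have h1 : 8 * 2^d * D / ((d.factorial : ℝ) * |c|) ≤ (t:ℝ) := by
      rw [ht]
      push_cast
      have := Nat.le_ceil (8 * 2^d * D / ((d.factorial : ℝ) * |c|))
      linarith
    have h2 : (0:ℝ) < (d.factorial:ℝ) * |c| := by positivity
    rw [div_le_iff₀ h2] at h1
    nlinarith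
  set γ : ℝ := 1 / (2 * (d.factorial:ℝ) * |c| * (t:ℝ)^d) with hγ
  have hγpos : 0 < γ := by positivity
  set ε : ℝ := 1 / (16 * 2^d * ((k:ℝ)+1)) with hε
  have hεpos : 0 < ε := by positivity
  set α : Fin k → ℝ := fun i => γ * θ i with hα
  -- construct E
  obtain ⟨q0, hq01, hq0⟩ := bohr_rec k α (by linarith : (0:ℝ) < ε/2)
  obtain ⟨G, hG⟩ := bohr_syndetic k α (by linarith : (0:ℝ) < ε/2)
  choose jf hjle hjp using hG
  set Qn : ℕ := q0 + G with hQn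
  have hQnpos : 0 < Qn := by omega
  set mseq : ℕ → ℕ := fun r => (r * Qn + jf (r * Qn)) + q0 with hmseq
  have hm1 : ∀ r, r * Qn + 1 ≤ mseq r := by intro r; simp only [hmseq]; omega
  have hm2 : ∀ r, mseq r ≤ (r+1) * Qn := by
    intro r
    have hh := hjle (r * Qn)
    simp only [hmseq]
    rw [add_mul, one_mul]
    omega
  set E : Set ℕ := Set.range mseq with hE
  have hEq : ∀ x ∈ E, ∀ i, distNearestInt ((x:ℝ) * α i) < ε := by
    rintro x ⟨r, rfl⟩ i
    have hsplit : ((mseq r : ℕ):ℝ) * α i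
        = ((r * Qn + jf (r * Qn) : ℕ):ℝ) * α i + (q0:ℝ) * α i := by
      simp only [hmseq]
      push_cast
      ring
    rw [hsplit]
    calc distNearestInt _ ≤ distNearestInt (((r * Qn + jf (r * Qn) : ℕ):ℝ) * α i)
          + distNearestInt ((q0:ℝ) * α i) := dni_add_le _ _
      _ < ε/2 + ε/2 := add_lt_add (hjp (r * Qn) i) (hq0 i)
      _ = ε := by ring
  refine ⟨E, density_of_seq mseq Qn hQnpos hm1 hm2, ?_⟩
  -- not thick
  intro hT
  obtain ⟨N, hN⟩ := hT (d * t)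
  -- the key pointwise estimate
  have key : ∀ j : ℕ, j ≤ d →
      distNearestInt (γ * P.eval ((N:ℝ) + (j:ℝ) * (t:ℝ))) ≤ 2*(k:ℝ)*ε + γ*D := by
    intro j hj
    set n : ℕ := N + j * t with hn
    have hnmem : n ∈ ⋂ i, retSet (u i) E := hN (j * t) (Nat.mul_le_mul_right t hj)
    have hui : ∀ i : Fin k, distNearestInt (((u i n : ℤ):ℝ) * α i) < 2*ε := by
      intro i
      obtain ⟨a, b, haE, hbE, hab⟩ := Set.mem_iInter.mp hnmem i
      have hz : u i n = (b:ℤ) - (a:ℤ) := by omega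
      have hzR : ((u i n : ℤ):ℝ) * α i = (b:ℝ) * α i - (a:ℝ) * α i := by
        rw [hz]; push_cast; ring
      rw [hzR]
      calc distNearestInt _ ≤ distNearestInt ((b:ℝ) * α i) + distNearestInt ((a:ℝ) * α i) :=
            dni_sub_le _ _
        _ < ε + ε := add_lt_add (hEq b hbE i) (hEq a haE i)
        _ = 2*ε := by ring
    have hsum : distNearestInt (∑ i, ((u i n : ℤ):ℝ) * α i) ≤ 2*(k:ℝ)*ε := by
      calc distNearestInt (∑ i, ((u i n : ℤ):ℝ) * α i)
          ≤ ∑ i, distNearestInt (((u i n : ℤ):ℝ) * α i) := dni_sum_le _ _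
        _ ≤ ∑ _i : Fin k, 2*ε := Finset.sum_le_sum (fun i _ => (hui i).le)
        _ = 2*(k:ℝ)*ε := by
            rw [Finset.sum_const, Finset.card_univ, Fintype.card_fin, nsmul_eq_mul]
            ring
    have hsum_eq : ∑ i, ((u i n : ℤ):ℝ) * α i = γ * ∑ i, θ i * (u i n : ℝ) := by
      rw [Finset.mul_sum]
      apply Finset.sum_congr rfl
      intro i _
      simp only [hα]
      ring
    have hcast : ((n:ℕ):ℝ) = (N:ℝ) + (j:ℝ) * (t:ℝ) := by
      rw [hn]; push_cast; ring
    calc distNearestInt (γ * P.eval ((N:ℝ) + (j:ℝ) * (t:ℝ)))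
        ≤ |γ * P.eval ((N:ℝ) + (j:ℝ) * (t:ℝ)) - γ * ∑ i, θ i * (u i n : ℝ)|
          + distNearestInt (γ * ∑ i, θ i * (u i n : ℝ)) := dni_lip _ _
      _ ≤ γ*D + 2*(k:ℝ)*ε := by
          apply add_le_add
          · have heq2 : |γ * P.eval ((N:ℝ) + (j:ℝ) * (t:ℝ)) - γ * ∑ i, θ i * (u i n : ℝ)|
                = γ * |(∑ i, θ i * (u i n : ℝ)) - P.eval ((n:ℕ):ℝ)| := by
              rw [hcast]
              rw [show γ * P.eval ((N:ℝ) + (j:ℝ) * (t:ℝ)) - γ * ∑ i, θ i * (u i n : ℝ)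
                  = -(γ * ((∑ i, θ i * (u i n : ℝ)) - P.eval ((N:ℝ) + (j:ℝ) * (t:ℝ))))
                from by ring]
              rw [abs_neg, abs_mul, abs_of_pos hγpos]
            rw [heq2]
            exact mul_le_mul_of_nonneg_left (hD n) hγpos.le
          · rw [← hsum_eq]
            exact hsum
      _ = 2*(k:ℝ)*ε + γ*D := by ring
  -- finite differences give a contradiction
  have hFD := finDiff d P rfl (N:ℝ) (t:ℝ) (by linarith)
  set Δ : ℝ := γ * ((-1:ℝ)^d * (d.factorial : ℝ) * c * (t:ℝ)^d) with hΔ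
  have habs : |Δ| = 1/2 := by
    rw [hΔ, hγ]
    rw [abs_mul, abs_mul, abs_mul, abs_mul, abs_pow, abs_neg, abs_one, one_pow]
    rw [abs_of_pos (by positivity : (0:ℝ) < 1 / (2 * (d.factorial:ℝ) * |c| * (t:ℝ)^d))]
    rw [abs_of_pos hfacpos, abs_of_pos (by positivity : (0:ℝ) < (t:ℝ)^d)]
    field_simp
  have hdniΔ : distNearestInt Δ = 1/2 := by
    rcases abs_eq (by norm_num : (0:ℝ) ≤ 1/2) |>.mp habs with h | h
    · rw [h]; exact dni_half
    · calc distNearestInt Δ = distNearestInt (-(1/2:ℝ)) := by rw [h]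
        _ = distNearestInt (1/2:ℝ) := dni_neg _
        _ = 1/2 := dni_half
  have hΔsum : Δ = ∑ j ∈ Finset.range (d+1),
      (-1:ℝ)^j * (d.choose j : ℝ) * (γ * P.eval ((N:ℝ) + (j:ℝ) * (t:ℝ))) := by
    rw [hΔ, ← hFD, Finset.mul_sum]
    apply Finset.sum_congr rfl
    intro j _
    ring
  have hbound : distNearestInt Δ ≤ (2:ℝ)^d * (2*(k:ℝ)*ε + γ*D) := by
    rw [hΔsum]
    calc distNearestInt (∑ j ∈ Finset.range (d+1),
          (-1:ℝ)^j * (d.choose j : ℝ) * (γ * P.eval ((N:ℝ) + (j:ℝ) * (t:ℝ))))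
        ≤ ∑ j ∈ Finset.range (d+1), distNearestInt
            ((-1:ℝ)^j * (d.choose j : ℝ) * (γ * P.eval ((N:ℝ) + (j:ℝ) * (t:ℝ)))) :=
          dni_sum_le _ _
      _ ≤ ∑ j ∈ Finset.range (d+1), (d.choose j : ℝ) * (2*(k:ℝ)*ε + γ*D) := by
          apply Finset.sum_le_sum
          intro j hj
          have hj' : j ≤ d := by
            rw [Finset.mem_range] at hj; omega
          have hterm : distNearestInt ((-1:ℝ)^j * (d.choose j : ℝ)
              * (γ * P.eval ((N:ℝ) + (j:ℝ) * (t:ℝ))))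
              = distNearestInt ((d.choose j : ℝ) * (γ * P.eval ((N:ℝ) + (j:ℝ) * (t:ℝ)))) := by
            rcases Nat.even_or_odd j with hpar | hpar
            · rw [hpar.neg_one_pow, one_mul]
            · have hneg : (-1:ℝ)^j * (d.choose j : ℝ) * (γ * P.eval ((N:ℝ) + (j:ℝ) * (t:ℝ)))
                  = -((d.choose j : ℝ) * (γ * P.eval ((N:ℝ) + (j:ℝ) * (t:ℝ)))) := by
                rw [hpar.neg_one_pow]; ring
              rw [hneg, dni_neg]
          rw [hterm]
          calc distNearestInt ((d.choose j : ℝ) * (γ * P.eval ((N:ℝ) + (j:ℝ) * (t:ℝ))))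
              ≤ (d.choose j : ℝ) * distNearestInt (γ * P.eval ((N:ℝ) + (j:ℝ) * (t:ℝ))) :=
                dni_nat_mul _ _
            _ ≤ (d.choose j : ℝ) * (2*(k:ℝ)*ε + γ*D) := by
                apply mul_le_mul_of_nonneg_left (key j hj') (by positivity)
      _ = (∑ j ∈ Finset.range (d+1), (d.choose j : ℝ)) * (2*(k:ℝ)*ε + γ*D) := by
          rw [← Finset.sum_mul]
      _ = (2:ℝ)^d * (2*(k:ℝ)*ε + γ*D) := by
          congr 1
          have := Nat.sum_range_choose d
          have hcast : ((∑ j ∈ Finset.range (d+1), d.choose j : ℕ) : ℝ) = ((2^d : ℕ):ℝ) := by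
            exact_mod_cast this
          push_cast at hcast
          exact hcast
  -- numeric contradiction
  have hb1 : (2:ℝ)^d * (2*(k:ℝ)*ε) ≤ 1/8 := by
    have h2d : (0:ℝ) < 2^d := by positivity
    have hk1 : (0:ℝ) < (k:ℝ) + 1 := by positivity
    have heq : (2:ℝ)^d * (2*(k:ℝ)*ε) = (k:ℝ)/(8*((k:ℝ)+1)) := by
      rw [hε]; field_simp; ring
    rw [heq, div_le_div_iff₀ (by positivity) (by norm_num : (0:ℝ) < 8)]
    nlinarith
  have hb2 : (2:ℝ)^d * (γ*D) ≤ 1/16 := by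
    rw [hγ]
    have hX : (0:ℝ) < 2 * (d.factorial:ℝ) * |c| * (t:ℝ)^d := by positivity
    rw [show (2:ℝ)^d * (1 / (2 * (d.factorial:ℝ) * |c| * (t:ℝ)^d) * D)
        = (2:ℝ)^d * D / (2 * (d.factorial:ℝ) * |c| * (t:ℝ)^d) from by ring]
    rw [div_le_iff₀ hX]
    nlinarith
  rw [hdniΔ] at hbound
  have : (2:ℝ)^d * (2*(k:ℝ)*ε + γ*D) = (2:ℝ)^d * (2*(k:ℝ)*ε) + (2:ℝ)^d * (γ*D) := by ring
  rw [this] at hbound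
  linarith
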